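/- arXiv:2211.11326 — 9 statements merged into one kernel-verified Lean document; each statement's English description precedes it below -/
import Mathlib

section
/- Let R be a partial applicative structure satisfying property K. Then the following are equivalent: (i) R is trivial; (ii) R is finite; (iii) R satisfies ID_R; (iv) R satisfies Assoc; (v) R satisfies Ab. -/
/-- Application lifted to partially-defined arguments: `oapp op x y` is the
value of the applicative term `x · y`, where `x`, `y` may be undefined. -/
def oapp {R : Type} (op : R → R → Option R) (x y : Option R) : Option R :=
  x.bind fun a => y.bind fun b => op a b

/-- The indexed entailment relation `φ ⊢_I ψ` on `P(R)^I` induced by a PAS. -/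
def Entails {R : Type} (op : R → R → Option R) {I : Type} (φ ψ : I → Set R) : Prop :=
  ∃ r : R, ∀ i : I, ∀ a ∈ φ i, ∃ b : R, op r a = some b ∧ b ∈ ψ i

/-- The entailment relation `A ⊢ B` on `P(R)` induced by a PAS. -/
def Entails1 {R : Type} (op : R → R → Option R) (A B : Set R) : Prop :=
  ∃ r : R, ∀ a ∈ A, ∃ b : R, op r a = some b ∧ b ∈ B

/-- `piter f n a` is the `n`-th iterate `f^n(a)` of the partial function `f` at `a`. -/
def piter {R : Type} (f : R → Option R) : ℕ → R → Option R
  | 0 => fun a => some a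
  | n + 1 => fun a => (piter f n a).bind f

/-- A partial function is TO if every point has finite odd order or finite divergence. -/
def TOfun {R : Type} (f : R → Option R) : Prop :=
  ∀ a : R,
    (∃ n : ℕ, (1 ≤ n ∧ piter f n a = some a ∧
        ∀ m : ℕ, 1 ≤ m → piter f m a = some a → n ≤ m) ∧ Odd n) ∨
    (∃ n : ℕ, 1 ≤ n ∧ piter f n a = none)

/-- A partial function is TL if every point is a fixed point or has finite divergence. -/
def TLfun {R : Type} (f : R → Option R) : Prop :=
  ∀ a : R, f a = some a ∨ (∃ n : ℕ, 1 ≤ n ∧ piter f n a = none)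

/-- For a PAS satisfying K, the properties Trivial, Finite, ID_R,
Assoc and Ab are all equivalent. -/
theorem stmt_1 {R : Type} [Nonempty R] (op : R → R → Option R)
    (hK : ∃ k : R, ∀ a b : R, ∃ ka : R, op k a = some ka ∧ op ka b = some a) :
    [ -- Trivial
      (∃ a : R, (∀ b : R, b = a) ∧ op a a = some a),
      -- Finite
      Finite R,
      -- ID_R
      (∃ j : R, ∀ a : R, op a j = some a),
      -- Assoc : a·(b·c) ≃ (a·b)·c
      (∀ a b c : R, oapp op (some a) (op b c) = oapp op (op a b) (some c)),
      -- Ab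
      (∀ a b : R, op a b = op b a) ].TFAE := by
  obtain ⟨k, hk⟩ := hK
  have hka : ∀ a : R, ∃ ka : R, op k a = some ka ∧ ∀ b : R, op ka b = some a := by
    intro a
    obtain ⟨ka, h1, _⟩ := hk a a
    refine ⟨ka, h1, fun b => ?_⟩
    obtain ⟨ka', h1', h2'⟩ := hk a b
    rw [h1] at h1'
    rwa [Option.some_inj.mp h1']
  choose f hf1 hf2 using hka
  have hinj : Function.Injective f := by
    intro a a' h
    have h1 := hf2 a a
    have h2 := hf2 a' a
    rw [← h] at h2
    rw [h1] at h2
    exact Option.some_inj.mp h2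
  -- triviality from a constant map at k
  have triv_of_kconst : (∀ b : R, op k b = some k) →
      (∃ a : R, (∀ b : R, b = a) ∧ op a a = some a) := by
    intro hc
    have hfk : ∀ b : R, f b = k := fun b =>
      Option.some_inj.mp ((hf1 b).symm.trans (hc b))
    have hall : ∀ a b : R, op k b = some a := by
      intro a b
      have := hf2 a b
      rwa [hfk a] at this
    refine ⟨k, fun b => ?_, hc k⟩
    exact Option.some_inj.mp ((hall b k).symm.trans (hc k))
  tfae_have 1 → 2 := by
    rintro ⟨a, ha, -⟩
    have : Subsingleton R := ⟨fun x y => (ha x).trans (ha y).symm⟩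
    exact Finite.of_subsingleton
  tfae_have 2 → 1 := by
    intro hfin
    obtain ⟨a₀, ha₀⟩ := Finite.surjective_of_injective hinj k
    have hconst : ∀ b : R, op k b = some a₀ := by
      intro b
      have := hf2 a₀ b
      rwa [ha₀] at this
    have hfa : ∀ a : R, f a = a₀ := fun a =>
      Option.some_inj.mp ((hf1 a).symm.trans (hconst a))
    have hall : ∀ a b : R, op a₀ b = some a := by
      intro a b
      have := hf2 a b
      rwa [hfa a] at this
    refine ⟨a₀, fun b => Option.some_inj.mp ((hall b a₀).symm.trans (hall a₀ a₀)), hall a₀ a₀⟩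
  tfae_have 3 → 1 := by
    rintro ⟨j, hj⟩
    have hfix : ∀ b : R, f b = b := fun b =>
      Option.some_inj.mp ((hj (f b)).symm.trans (hf2 b j))
    have h1 : ∀ x c : R, op x c = some x := by
      intro x c
      have := hf2 x c
      rwa [hfix x] at this
    exact triv_of_kconst (fun b => h1 k b)
  tfae_have 4 → 1 := by
    intro hA
    have h1 : ∀ a c : R, op a c = some a := by
      intro a c
      have h := hA (f a) (f a) c
      rw [hf2 a c, hf2 a (f a)] at h
      simpa [oapp, hf2 a a] using h.symm
    exact triv_of_kconst (fun b => h1 k b)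
  tfae_have 5 → 1 := by
    intro hAb
    have hff : ∀ a : R, f (f a) = a := by
      intro a
      have h1 : op k (f a) = some a := by rw [hAb]; exact hf2 a k
      exact Option.some_inj.mp ((hf1 (f a)).symm.trans h1)
    have h1 : ∀ a y : R, op a y = some (f a) := by
      intro a y
      have := hf2 (f a) y
      rwa [hff a] at this
    have hfeq : ∀ y : R, f y = f k := by
      intro y
      have := (hf1 y).symm.trans (h1 k y)
      exact Option.some_inj.mp this
    have hyk : ∀ y : R, y = k := fun y => hinj (hfeq y)
    apply triv_of_kconst
    intro b
    have : f k = k := (hyk (f k)).symm ▸ rfl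
    rw [h1 k b, hyk (f k)]
  tfae_have 1 → 3 := by
    rintro ⟨a, ha, haa⟩
    refine ⟨a, fun x => ?_⟩
    rw [ha x]; exact haa
  tfae_have 1 → 4 := by
    rintro ⟨a, ha, haa⟩
    intro x y z
    rw [ha x, ha y, ha z]
    simp [oapp, haa]
  tfae_have 1 → 5 := by
    rintro ⟨a, ha, -⟩
    intro x y
    rw [ha x, ha y]
  tfae_finish
end

section
/- Let R be a partial combinatory algebra. Then the following are equivalent: (i) R is trivial; (ii) R satisfies Ab; (iii) R satisfies Assoc; (iv) R satisfies ID_R; (v) R satisfies 1W; (vi) R is finite. -/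
namespace PcaAux

variable {R : Type} (op : R → R → Option R)

theorem oapp_ss (a b : R) : oapp op (some a) (some b) = op a b := rfl
theorem oapp_none_left (y : Option R) : oapp op none y = none := rfl
theorem oapp_none_right (x : Option R) : oapp op x none = none := by
  cases x <;> rfl

theorem hk' {k : R} (hk : ∀ a b : R, ∃ ka : R, op k a = some ka ∧ op ka b = some a) :
    ∀ a : R, ∃ ka : R, op k a = some ka ∧ ∀ b : R, op ka b = some a := by
  intro a
  obtain ⟨ka, h1, _⟩ := hk a a
  refine ⟨ka, h1, fun b => ?_⟩
  obtain ⟨ka', h1', h2'⟩ := hk a b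
  rw [h1] at h1'
  injection h1' with h
  rw [h]; exact h2'

theorem exists_i
    (hK : ∃ k : R, ∀ a b : R, ∃ ka : R, op k a = some ka ∧ op ka b = some a)
    (hS : ∃ s : R,
      (∀ a b : R, (oapp op (oapp op (some s) (some a)) (some b)).isSome) ∧
      (∀ a b c : R,
        oapp op (oapp op (oapp op (some s) (some a)) (some b)) (some c) =
          oapp op (oapp op (some a) (some c)) (oapp op (some b) (some c)))) :
    ∃ i : R, ∀ a : R, op i a = some a := by
  obtain ⟨k, hk⟩ := hK
  obtain ⟨s, htot, heq⟩ := hS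
  have h := htot k k
  rw [oapp_ss] at h
  cases hsk : op s k with
  | none => rw [hsk, oapp_none_left] at h; exact absurd h (by simp)
  | some sk =>
    rw [hsk, oapp_ss] at h
    cases hskk : op sk k with
    | none => rw [hskk] at h; exact absurd h (by simp)
    | some i0 =>
      refine ⟨i0, fun a => ?_⟩
      have he := heq k k a
      rw [oapp_ss, hsk, oapp_ss, hskk, oapp_ss, oapp_ss] at he
      obtain ⟨ka, h1, h2⟩ := hk' op hk a
      rw [h1, oapp_ss, h2 ka] at he
      exact he

/-- From "all elements equal" to Trivial. -/
theorem alleq_trivial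
    (hK : ∃ k : R, ∀ a b : R, ∃ ka : R, op k a = some ka ∧ op ka b = some a)
    (hS : ∃ s : R,
      (∀ a b : R, (oapp op (oapp op (some s) (some a)) (some b)).isSome) ∧
      (∀ a b c : R,
        oapp op (oapp op (oapp op (some s) (some a)) (some b)) (some c) =
          oapp op (oapp op (some a) (some c)) (oapp op (some b) (some c))))
    (h : ∀ b c : R, b = c) :
    ∃ a : R, (∀ b : R, b = a) ∧ op a a = some a := by
  obtain ⟨i, hi⟩ := exists_i op hK hS
  exact ⟨i, fun b => h b i, hi i⟩

/-- Ab implies all elements equal. -/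
theorem ab_alleq {k : R}
    (hk : ∀ a b : R, ∃ ka : R, op k a = some ka ∧ op ka b = some a)
    (hAb : ∀ a b : R, op a b = op b a) :
    ∀ b c : R, b = c := by
  intro b c
  obtain ⟨kb, hb1, hb2⟩ := hk' op hk b
  obtain ⟨kc, hc1, hc2⟩ := hk' op hk c
  have h1 : op kb kc = some c := (hAb kb kc).trans (hc2 kb)
  have h2 : op kb kc = some b := hb2 kc
  rw [h1] at h2
  injection h2 with h
  exact h.symm

/-- Assoc implies all elements equal. -/
theorem assoc_alleq [Nonempty R] {k : R}
    (hk : ∀ a b : R, ∃ ka : R, op k a = some ka ∧ op ka b = some a)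
    (hA : ∀ a b c : R, oapp op (some a) (op b c) = oapp op (op a b) (some c)) :
    ∀ b c : R, b = c := by
  obtain ⟨x⟩ := (inferInstance : Nonempty R)
  obtain ⟨kk, hkk1, hkk2⟩ := hk' op hk k
  obtain ⟨kx, hkx1, hkx2⟩ := hk' op hk x
  have h := hA k k x
  rw [hkx1, hkk1, oapp_ss, oapp_ss, hkk2 x] at h
  -- h : op k kx = some k
  obtain ⟨w, hw1, hw2⟩ := hk' op hk kx
  rw [h] at hw1
  injection hw1 with hw
  rw [← hw] at hw2
  -- hw2 : ∀ c, op k c = some kx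
  have key : ∀ y : R, y = x := by
    intro y
    obtain ⟨ky, hky1, hky2⟩ := hk' op hk y
    rw [hw2 y] at hky1
    injection hky1 with hky
    have h1 : op kx kx = some y := by rw [hky]; exact hky2 ky
    have h2 : op kx kx = some x := hkx2 kx
    rw [h1] at h2
    exact Option.some.inj h2
  intro b c
  rw [key b, key c]

/-- ID_R implies all elements equal. -/
theorem idr_alleq {k s : R}
    (hk : ∀ a b : R, ∃ ka : R, op k a = some ka ∧ op ka b = some a)
    (heq : ∀ a b c : R,
        oapp op (oapp op (oapp op (some s) (some a)) (some b)) (some c) =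
          oapp op (oapp op (some a) (some c)) (oapp op (some b) (some c)))
    (hJ : ∃ j : R, ∀ a : R, op a j = some a) :
    ∀ b c : R, b = c := by
  obtain ⟨j, hj⟩ := hJ
  have htot : ∀ a b : R, op a b = some a := by
    intro a b
    obtain ⟨ka, h1, h2⟩ := hk' op hk a
    have h3 : op ka j = some ka := hj ka
    rw [h2 j] at h3
    injection h3 with h3
    rw [← h3] at h2
    exact h2 b
  have key : ∀ a : R, a = s := by
    intro a
    have he := heq a a a
    rw [oapp_ss, oapp_ss, htot s a, oapp_ss, htot s a, oapp_ss, htot s a,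
        htot a a, oapp_ss, htot a a] at he
    injection he with he
    exact he.symm
  intro b c
  rw [key b, key c]

/-- 1W implies all elements equal. -/
theorem onew_alleq {k : R}
    (hk : ∀ a b : R, ∃ ka : R, op k a = some ka ∧ op ka b = some a)
    (h1w : ∀ r s a b : R, op r a = some b → op s b = some a → a = b) :
    ∀ b c : R, b = c := by
  intro b c
  obtain ⟨kb, hb1, hb2⟩ := hk' op hk b
  obtain ⟨kc, hc1, hc2⟩ := hk' op hk c
  exact h1w kc kb b c (hc2 b) (hb2 c)

/-- Pairing: for all x y there is p with p·k = x and p·f = y, where f a = some i. -/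
theorem exists_pair {k s : R}
    (hk : ∀ a b : R, ∃ ka : R, op k a = some ka ∧ op ka b = some a)
    (htot : ∀ a b : R, (oapp op (oapp op (some s) (some a)) (some b)).isSome)
    (heq : ∀ a b c : R,
        oapp op (oapp op (oapp op (some s) (some a)) (some b)) (some c) =
          oapp op (oapp op (some a) (some c)) (oapp op (some b) (some c)))
    {i f : R} (hi : ∀ a : R, op i a = some a) (hf : ∀ b : R, op f b = some i)
    (x y : R) :
    ∃ p : R, op p k = some x ∧ op p f = some y := by
  obtain ⟨kx, hkx1, hkx2⟩ := hk' op hk x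
  obtain ⟨ky, hky1, hky2⟩ := hk' op hk y
  -- A := s·i·kx
  have h := htot i kx
  rw [oapp_ss] at h
  cases hsi : op s i with
  | none => rw [hsi, oapp_none_left] at h; exact absurd h (by simp)
  | some si =>
    rw [hsi, oapp_ss] at h
    cases hA : op si kx with
    | none => rw [hA] at h; exact absurd h (by simp)
    | some A =>
      have hAz : ∀ z : R, op A z = op z x := by
        intro z
        have he := heq i kx z
        rw [oapp_ss, hsi, oapp_ss, hA, oapp_ss, oapp_ss, hi z, oapp_ss, hkx2 z,
            oapp_ss] at he
        exact he
      -- p := s·A·ky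
      have h2 := htot A ky
      rw [oapp_ss] at h2
      cases hsA : op s A with
      | none => rw [hsA, oapp_none_left] at h2; exact absurd h2 (by simp)
      | some sA =>
        rw [hsA, oapp_ss] at h2
        cases hp : op sA ky with
        | none => rw [hp] at h2; exact absurd h2 (by simp)
        | some p =>
          have hpz : ∀ z : R, op p z = oapp op (op z x) (some y) := by
            intro z
            have he := heq A ky z
            rw [oapp_ss, hsA, oapp_ss, hp, oapp_ss, oapp_ss, hAz z, oapp_ss,
                hky2 z] at he
            exact he
          refine ⟨p, ?_, ?_⟩
          · rw [hpz k, hkx1, oapp_ss, hkx2 y]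
          · rw [hpz f, hf x, oapp_ss, hi y]

/-- Finite implies all elements equal. -/
theorem finite_alleq [Nonempty R]
    (hK : ∃ k : R, ∀ a b : R, ∃ ka : R, op k a = some ka ∧ op ka b = some a)
    (hS : ∃ s : R,
      (∀ a b : R, (oapp op (oapp op (some s) (some a)) (some b)).isSome) ∧
      (∀ a b c : R,
        oapp op (oapp op (oapp op (some s) (some a)) (some b)) (some c) =
          oapp op (oapp op (some a) (some c)) (oapp op (some b) (some c))))
    (hfin : Finite R) :
    ∀ b c : R, b = c := by
  by_contra hcon
  push_neg at hcon
  obtain ⟨x0, y0, hxy⟩ := hcon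
  obtain ⟨i, hi⟩ := exists_i op hK hS
  obtain ⟨k, hk⟩ := hK
  obtain ⟨s, htot, heq⟩ := hS
  obtain ⟨f, hf1, hf⟩ := hk' op hk i
  -- k ≠ f
  have hkf : k ≠ f := by
    intro hEq
    apply hxy
    obtain ⟨kx, h1, h2⟩ := hk' op hk x0
    rw [hEq, hf x0] at h1
    injection h1 with h1
    rw [← h1] at h2
    have ha := h2 y0
    rw [hi y0] at ha
    injection ha with ha
    exact ha.symm
  -- numerals
  have hP := exists_pair op hk htot heq hi hf
  let P : R → R → R := fun x y => (hP x y).choose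
  have hPk : ∀ x y : R, op (P x y) k = some x := fun x y => (hP x y).choose_spec.1
  have hPf : ∀ x y : R, op (P x y) f = some y := fun x y => (hP x y).choose_spec.2
  let N : ℕ → R := fun n => Nat.rec i (fun _ prev => P f prev) n
  have hN0 : op (N 0) k = some k := hi k
  have hNsk : ∀ n : ℕ, op (N (n + 1)) k = some f := fun n => hPk f (N n)
  have hNsf : ∀ n : ℕ, op (N (n + 1)) f = some (N n) := fun n => hPf f (N n)
  have hNinj : Function.Injective N := by
    intro n m hnm
    induction n generalizing m with
    | zero =>
      cases m with
      | zero => rfl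
      | succ m =>
        exfalso
        have := hNsk m
        rw [← hnm, hN0] at this
        injection this with h
        exact hkf h
    | succ n ih =>
      cases m with
      | zero =>
        exfalso
        have := hNsk n
        rw [hnm, hN0] at this
        injection this with h
        exact hkf h
      | succ m =>
        have h1 := hNsf n
        rw [hnm, hNsf m] at h1
        injection h1 with h1
        rw [ih h1.symm]
  have : Finite ℕ := Finite.of_injective N hNinj
  exact (not_finite_iff_infinite.mpr inferInstance) this

end PcaAux

/-- For a partial combinatory algebra, the properties Trivial, Ab,
Assoc, ID_R, 1W and Finite are all equivalent. -/
theorem stmt_3 {R : Type} [Nonempty R] (op : R → R → Option R)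
    (hK : ∃ k : R, ∀ a b : R, ∃ ka : R, op k a = some ka ∧ op ka b = some a)
    (hS : ∃ s : R,
      (∀ a b : R, (oapp op (oapp op (some s) (some a)) (some b)).isSome) ∧
      (∀ a b c : R,
        oapp op (oapp op (oapp op (some s) (some a)) (some b)) (some c) =
          oapp op (oapp op (some a) (some c)) (oapp op (some b) (some c)))) :
    [ -- Trivial
      (∃ a : R, (∀ b : R, b = a) ∧ op a a = some a),
      -- Ab
      (∀ a b : R, op a b = op b a),
      -- Assoc
      (∀ a b c : R, oapp op (some a) (op b c) = oapp op (op a b) (some c)),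
      -- ID_R
      (∃ j : R, ∀ a : R, op a j = some a),
      -- 1W
      (∀ r s a b : R, op r a = some b → op s b = some a → a = b),
      -- Finite
      Finite R ].TFAE := by
  obtain ⟨k, hk⟩ := hK
  obtain ⟨s, htot, heq⟩ := hS
  have hK' : ∃ k : R, ∀ a b : R, ∃ ka : R, op k a = some ka ∧ op ka b = some a := ⟨k, hk⟩
  have hS' : ∃ s : R,
      (∀ a b : R, (oapp op (oapp op (some s) (some a)) (some b)).isSome) ∧
      (∀ a b c : R,
        oapp op (oapp op (oapp op (some s) (some a)) (some b)) (some c) =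
          oapp op (oapp op (some a) (some c)) (oapp op (some b) (some c))) := ⟨s, htot, heq⟩
  tfae_have 1 → 2 := by
    rintro ⟨a, hall, haa⟩ b c
    rw [hall b, hall c]
  tfae_have 1 → 3 := by
    rintro ⟨a, hall, haa⟩ x y z
    rw [hall x, hall y, hall z, haa]
  tfae_have 1 → 4 := by
    rintro ⟨a, hall, haa⟩
    exact ⟨a, fun b => by rw [hall b]; exact haa⟩
  tfae_have 1 → 5 := by
    rintro ⟨a, hall, haa⟩ r s' x y _ _
    rw [hall x, hall y]
  tfae_have 1 → 6 := by
    rintro ⟨a, hall, haa⟩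
    have : Subsingleton R := ⟨fun x y => (hall x).trans (hall y).symm⟩
    exact Finite.of_subsingleton
  tfae_have 2 → 1 := fun h =>
    PcaAux.alleq_trivial op hK' hS' (PcaAux.ab_alleq op hk h)
  tfae_have 3 → 1 := fun h =>
    PcaAux.alleq_trivial op hK' hS' (PcaAux.assoc_alleq op hk h)
  tfae_have 4 → 1 := fun h =>
    PcaAux.alleq_trivial op hK' hS' (PcaAux.idr_alleq op hk heq h)
  tfae_have 5 → 1 := fun h =>
    PcaAux.alleq_trivial op hK' hS' (PcaAux.onew_alleq op hk h)
  tfae_have 6 → 1 := fun h =>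
    PcaAux.alleq_trivial op hK' hS' (PcaAux.finite_alleq op hK' hS' h)
  tfae_finish
end

section
/- A partial applicative structure R is transitive (i.e. for every set I the relation ⊢_I on functions I → P(R) is transitive) if and only if for every r, s ∈ R there exists t ∈ R such that for every a ∈ R, if s·(r·a) is defined then t·a is defined and s·(r·a) = t·a (that is, [t] extends [s]∘[r]). -/
/-- A PAS is transitive iff for all `r s` there is `t` whose
represented partial function extends `[s] ∘ [r]`. -/
theorem stmt_5 {R : Type} [Nonempty R] (op : R → R → Option R) :
    (∀ (I : Type) (φ ψ ρ : I → Set R),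
        Entails op φ ψ → Entails op ψ ρ → Entails op φ ρ) ↔
      (∀ r s : R, ∃ t : R, ∀ a b : R,
        (op r a).bind (op s) = some b → op t a = some b) := by
  constructor
  · intro htrans r s
    set I := {a : R // ∃ b, (op r a).bind (op s) = some b} with hI
    have h1 : Entails op (fun i : I => {(i : R)}) (fun i : I => {b | op r i.val = some b}) := by
      refine ⟨r, fun i a ha => ?_⟩
      rcases i.2 with ⟨b0, hb0⟩
      rcases Option.bind_eq_some_iff.mp hb0 with ⟨b, hb, _⟩
      cases ha
      exact ⟨b, hb, hb⟩
    have h2 : Entails op (fun i : I => {b | op r i.val = some b})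
        (fun i : I => {c | (op r i.val).bind (op s) = some c}) := by
      refine ⟨s, fun i a ha => ?_⟩
      rcases i.2 with ⟨b0, hb0⟩
      rcases Option.bind_eq_some_iff.mp hb0 with ⟨b, hb, hs⟩
      have : a = b := by
        have := ha.symm.trans hb
        exact Option.some.inj this
      subst this
      exact ⟨b0, hs, by simp [hb, hs]⟩
    rcases htrans I _ _ _ h1 h2 with ⟨t, ht⟩
    refine ⟨t, fun a b hab => ?_⟩
    rcases ht ⟨a, b, hab⟩ a rfl with ⟨c, hc, hmem⟩
    have : c = b := Option.some.inj (hmem.symm.trans hab)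
    subst this
    exact hc
  · intro h I φ ψ ρ ⟨r, hr⟩ ⟨s, hs⟩
    rcases h r s with ⟨t, ht⟩
    refine ⟨t, fun i a ha => ?_⟩
    rcases hr i a ha with ⟨b, hb, hbψ⟩
    rcases hs i b hbψ with ⟨c, hc, hcρ⟩
    exact ⟨c, ht a c (by simp [hb, hc]), hcρ⟩
end

section
/- For a partial applicative structure R the following are equivalent: (i) R has right bounds (for every set I and every φ : I → P(R) there exists ψ : I → P(R) with φ ⊢_I ψ); (ii) R has maximum (for every set I there exists ψ : I → P(R) with φ ⊢_I ψ for all φ : I → P(R)); (iii) R satisfies 1-Total (there exists r ∈ R such that r·a is defined for every a ∈ R). -/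
/-- For a PAS, having right bounds, having maximum and satisfying
1-Total are equivalent. -/
theorem stmt_8 {R : Type} [Nonempty R] (op : R → R → Option R) :
    [ -- right bounds
      (∀ (I : Type) (φ : I → Set R), ∃ ψ : I → Set R, Entails op φ ψ),
      -- maximum
      (∀ I : Type, ∃ ψ : I → Set R, ∀ φ : I → Set R, Entails op φ ψ),
      -- 1-Total
      (∃ r : R, ∀ a : R, (op r a).isSome) ].TFAE := by
  tfae_have 1 → 3 := by
    intro h
    obtain ⟨ψ, r, hr⟩ := h R (fun a => {a})
    exact ⟨r, fun a => by
      obtain ⟨b, hb, -⟩ := hr a a rfl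
      simp [hb]⟩
  tfae_have 3 → 2 := by
    rintro ⟨r, hr⟩ I
    refine ⟨fun _ => Set.univ, fun φ => ⟨r, fun i a _ => ?_⟩⟩
    obtain ⟨b, hb⟩ := Option.isSome_iff_exists.mp (hr a)
    exact ⟨b, hb, trivial⟩
  tfae_have 2 → 1 := by
    intro h I φ
    obtain ⟨ψ, hψ⟩ := h I
    exact ⟨ψ, hψ φ⟩
  tfae_finish
end

section
/- A partial applicative structure R is preorderal (i.e. for every set I the relation ⊢_I on functions I → P(R) is a preorder) if and only if: (1) there exists i ∈ R such that i·a = a for every a ∈ R, and (2) for every r, s ∈ R there exists t ∈ R such that for every a ∈ R, if s·(r·a) is defined then t·a is defined and s·(r·a) = t·a. -/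
/-- A PAS is preorderal iff it has a left identity element and
for all `r s` there is `t` whose represented function extends `[s] ∘ [r]`. -/
theorem stmt_10 {R : Type} [Nonempty R] (op : R → R → Option R) :
    ((∀ (I : Type) (φ : I → Set R), Entails op φ φ) ∧
     (∀ (I : Type) (φ ψ ρ : I → Set R),
        Entails op φ ψ → Entails op ψ ρ → Entails op φ ρ)) ↔
    ((∃ i : R, ∀ a : R, op i a = some a) ∧
     (∀ r s : R, ∃ t : R, ∀ a b : R,
        (op r a).bind (op s) = some b → op t a = some b)) := by
  constructor
  · rintro ⟨hrefl, htrans⟩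
    constructor
    · obtain ⟨i, hi⟩ := hrefl R (fun a => {a})
      exact ⟨i, fun a => by
        obtain ⟨b, hb, hb'⟩ := hi a a rfl
        rw [Set.mem_singleton_iff.mp hb'] at hb
        exact hb⟩
    · intro r s
      set I := {a : R // ∃ b, (op r a).bind (op s) = some b} with hI
      have h1 : Entails op (fun x : I => ({x.val} : Set R))
          (fun x : I => {b | op r x.val = some b}) := by
        refine ⟨r, fun x a ha => ?_⟩
        rcases x.2 with ⟨c, hc⟩
        rcases Option.bind_eq_some_iff.mp hc with ⟨b, hb, _⟩
        exact ⟨b, Set.mem_singleton_iff.mp ha ▸ hb, hb⟩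
      have h2 : Entails op (fun x : I => {b | op r x.val = some b})
          (fun x : I => {b | (op r x.val).bind (op s) = some b}) := by
        refine ⟨s, fun x a ha => ?_⟩
        rcases x.2 with ⟨c, hc⟩
        have ha' : op r x.val = some a := ha
        rw [ha'] at hc
        exact ⟨c, hc, show (op r x.val).bind (op s) = some c by rw [ha']; exact hc⟩
      obtain ⟨t, ht⟩ := htrans I _ _ _ h1 h2
      refine ⟨t, fun a b hab => ?_⟩
      obtain ⟨b', hb', hmem⟩ := ht ⟨a, b, hab⟩ a rfl
      have : (op r a).bind (op s) = some b' := hmem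
      rw [hab] at this
      rw [hb', Option.some_inj.mp this]
  · rintro ⟨⟨i, hi⟩, hc⟩
    constructor
    · intro I φ
      exact ⟨i, fun j a ha => ⟨a, hi a, ha⟩⟩
    · rintro I φ ψ ρ ⟨r, hr⟩ ⟨s, hs⟩
      obtain ⟨t, ht⟩ := hc r s
      refine ⟨t, fun j a ha => ?_⟩
      obtain ⟨b, hb, hbψ⟩ := hr j a ha
      obtain ⟨c, hcv, hcρ⟩ := hs j b hbψ
      refine ⟨c, ht a c ?_, hcρ⟩
      rw [hb]; exact hcv
end

section
/- Let f : R ⇀ R be a partial function on a nonempty set R and n ∈ ℕ. If f is TO then the n-th iterate f^n is TO, and if f is TL then f^n is TL. -/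
lemma piter_succ {R : Type} (f : R → Option R) (n : ℕ) (a : R) :
    piter f (n + 1) a = (piter f n a).bind f := rfl

lemma piter_add {R : Type} (f : R → Option R) (m n : ℕ) (a : R) :
    piter f (m + n) a = (piter f m a).bind (piter f n) := by
  induction n with
  | zero => simp [piter]
  | succ n ih =>
    show piter f ((m+n)+1) a = _
    rw [piter_succ, ih]
    cases piter f m a with
    | none => rfl
    | some b => simp [piter]

lemma piter_comp {R : Type} (f : R → Option R) (n m : ℕ) (a : R) :
    piter (piter f n) m a = piter f (n * m) a := by
  induction m with
  | zero => simp [piter]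
  | succ m ih =>
    rw [piter_succ, ih, Nat.mul_succ, piter_add]

lemma piter_none_mono {R : Type} (f : R → Option R) {m m' : ℕ} (h : m ≤ m')
    {a : R} (hm : piter f m a = none) : piter f m' a = none := by
  obtain ⟨j, rfl⟩ := Nat.exists_eq_add_of_le h
  rw [piter_add, hm]; rfl

lemma piter_period {R : Type} (f : R → Option R) {k : ℕ} {a : R}
    (hk : piter f k a = some a) (q : ℕ) : piter f (k * q) a = some a := by
  induction q with
  | zero => simp [piter]
  | succ q ih =>
    rw [Nat.mul_succ, piter_add, ih]
    exact hk

lemma order_dvd {R : Type} (f : R → Option R) {k : ℕ} {a : R}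
    (hk1 : 1 ≤ k) (hk : piter f k a = some a)
    (hmin : ∀ m : ℕ, 1 ≤ m → piter f m a = some a → k ≤ m) :
    ∀ j : ℕ, piter f j a = some a → k ∣ j := by
  intro j
  induction j using Nat.strong_induction_on with
  | _ j ih =>
    intro hj
    rcases Nat.eq_zero_or_pos j with rfl | hj1
    · exact Dvd.intro 0 rfl
    · have hkj : k ≤ j := hmin j hj1 hj
      have : piter f (k + (j - k)) a = some a := by rwa [Nat.add_sub_cancel' hkj]
      rw [piter_add, hk, Option.bind_some] at this
      rcases Nat.eq_zero_or_pos (j - k) with h0 | hpos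
      · have : j = k := le_antisymm (Nat.le_of_sub_eq_zero h0) hkj
        exact this ▸ dvd_refl k
      · have hd : k ∣ (j - k) := ih (j - k) (by omega) this
        have : k ∣ (j - k) + k := hd.add (dvd_refl k)
        rwa [Nat.sub_add_cancel hkj] at this

/-- If `f` is TO (resp. TL) then so is its `n`-th iterate. -/
theorem stmt_12 {R : Type} [Nonempty R] (f : R → Option R) (n : ℕ) :
    (TOfun f → TOfun (piter f n)) ∧ (TLfun f → TLfun (piter f n)) := by
  rcases Nat.eq_zero_or_pos n with rfl | hn
  · constructor
    · intro _ a
      left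
      exact ⟨1, ⟨le_refl 1, by simp [piter], fun m hm _ => hm⟩, odd_one⟩
    · intro _ a
      left; simp [piter]
  constructor
  · intro hTO a
    rcases hTO a with ⟨k, ⟨hk1, hka, hkmin⟩, hkodd⟩ | ⟨m, hm1, hmn⟩
    · left
      set d := Nat.gcd n k with hd
      have hd1 : 1 ≤ d := Nat.gcd_pos_of_pos_left k hn
      have hdk : d ∣ k := Nat.gcd_dvd_right n k
      have hdn : d ∣ n := Nat.gcd_dvd_left n k
      refine ⟨k / d, ⟨Nat.one_le_div_iff hd1 |>.2 (Nat.le_of_dvd (by omega) hdk), ?_, ?_⟩, ?_⟩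
      · rw [piter_comp]
        have : n * (k / d) = k * (n / d) := by
          obtain ⟨k', hk'⟩ := hdk
          obtain ⟨n', hn'⟩ := hdn
          rw [hk', hn', Nat.mul_div_cancel_left _ (by omega : 0 < d),
            Nat.mul_div_cancel_left _ (by omega : 0 < d)]
          ring
        rw [this]
        exact piter_period f hka _
      · intro m hm1 hm
        rw [piter_comp] at hm
        have hdvd : k ∣ n * m := order_dvd f hk1 hka hkmin _ hm
        have hcop : Nat.Coprime (k / d) (n / d) := (Nat.coprime_div_gcd_div_gcd hd1).symm
        have : (k / d) ∣ (n / d) * m := by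
          obtain ⟨c, hc⟩ := hdvd
          refine ⟨c, ?_⟩
          have : d * ((n/d) * m) = d * ((k/d) * c) := by
            rw [← mul_assoc, ← mul_assoc, Nat.mul_div_cancel' hdn, Nat.mul_div_cancel' hdk, hc]
          exact Nat.eq_of_mul_eq_mul_left (by omega) this
        have hdvdm : (k / d) ∣ m := hcop.dvd_of_dvd_mul_left this
        exact Nat.le_of_dvd (by omega) hdvdm
      · rcases Nat.even_or_odd (k / d) with he | ho
        · exfalso
          have h2 : 2 ∣ k := dvd_trans he.two_dvd (Nat.div_dvd_of_dvd hdk)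
          rw [Nat.odd_iff] at hkodd
          omega
        · exact ho
    · right
      refine ⟨m, hm1, ?_⟩
      rw [piter_comp]
      exact piter_none_mono f (Nat.le_mul_of_pos_left m hn) hmn
  · intro hTL a
    rcases hTL a with hfa | ⟨m, hm1, hmn⟩
    · left
      have : piter f n a = some a := by
        clear hn
        induction n with
        | zero => simp [piter]
        | succ n ih => rw [piter_succ, ih]; exact hfa
      exact this
    · right
      refine ⟨m, hm1, ?_⟩
      rw [piter_comp]
      exact piter_none_mono f (Nat.le_mul_of_pos_left m hn) hmn
end

section
/- Let R be a transitive partial applicative structure satisfying property TL and property 1W. Then R is antisymmetric: for all subsets A, B ⊆ R, if A ⊢ B and B ⊢ A then A = B (and hence ⊢_I is antisymmetric for every set I). -/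
/-- Key lemma: under the hypotheses, `A ⊢ B` and `B ⊢ A` imply `A ⊆ B`. -/
lemma stmt_15_incl {R : Type} (op : R → R → Option R)
    (hTrans : ∀ (I : Type) (φ ψ ρ : I → Set R),
      Entails op φ ψ → Entails op ψ ρ → Entails op φ ρ)
    (hTL : ∀ r : R, TLfun (fun a => op r a))
    (h1W : ∀ r s a b : R, op r a = some b → op s b = some a → a = b)
    (A B : Set R) (hAB : Entails1 op A B) (hBA : Entails1 op B A) : A ⊆ B := by
  obtain ⟨r, hr⟩ := hAB
  obtain ⟨s, hs⟩ := hBA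
  -- transitivity with singleton index family I = A gives a tracker t of a ↦ s·(r·a) on A
  have h1 : Entails op (fun i : {a : R // a ∈ A} => ({i.1} : Set R))
      (fun i => {b | op r i.1 = some b}) := by
    refine ⟨r, fun i a ha => ?_⟩
    rcases ha with rfl
    obtain ⟨b, hb, _⟩ := hr i.1 i.2
    exact ⟨b, hb, hb⟩
  have h2 : Entails op (fun i : {a : R // a ∈ A} => ({b | op r i.1 = some b} : Set R))
      (fun i => {c | ∃ b, op r i.1 = some b ∧ op s b = some c}) := by
    refine ⟨s, fun i b hb => ?_⟩
    obtain ⟨b', hb', hbB⟩ := hr i.1 i.2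
    have : b = b' := by rw [hb] at hb'; exact Option.some.inj hb'
    subst this
    obtain ⟨c, hc, _⟩ := hs b hbB
    exact ⟨c, hc, b, hb, hc⟩
  obtain ⟨t, ht⟩ := hTrans _ _ _ _ h1 h2
  -- on A, t·a = s·(r·a) ∈ A
  have htA : ∀ a ∈ A, ∃ c, op t a = some c ∧ c ∈ A := by
    intro a ha
    obtain ⟨c, hc, b, hb, hsc⟩ := ht ⟨a, ha⟩ a rfl
    obtain ⟨b', hb', hbB⟩ := hr a ha
    have : b = b' := by rw [hb] at hb'; exact Option.some.inj hb'
    subst this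
    obtain ⟨c', hc', hcA⟩ := hs b hbB
    have : c = c' := by rw [hsc] at hc'; exact Option.some.inj hc'
    subst this
    exact ⟨c, hc, hcA⟩
  intro a ha
  -- all iterates of t at a are defined and stay in A
  have hiter : ∀ n, ∃ x, piter (fun a => op t a) n a = some x ∧ x ∈ A := by
    intro n
    induction n with
    | zero => exact ⟨a, rfl, ha⟩
    | succ n ih =>
      obtain ⟨x, hx, hxA⟩ := ih
      obtain ⟨c, hc, hcA⟩ := htA x hxA
      refine ⟨c, ?_, hcA⟩
      simp [piter, hx, hc]
  -- TL forces t·a = a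
  have hfix : op t a = some a := by
    rcases hTL t a with h | ⟨n, _, hn⟩
    · exact h
    · obtain ⟨x, hx, _⟩ := hiter n
      rw [hn] at hx; exact absurd hx (by simp)
  -- so s·(r·a) = a, and 1W gives a = r·a ∈ B
  obtain ⟨c, hc, b, hb, hsc⟩ := ht ⟨a, ha⟩ a rfl
  have hb2 : op r a = some b := hb
  have hca : c = a := by rw [hfix] at hc; exact (Option.some.inj hc).symm
  rw [hca] at hsc
  have hab : a = b := h1W r s a b hb2 hsc
  obtain ⟨b', hb', hbB⟩ := hr a ha
  have : b = b' := by rw [hb2] at hb'; exact Option.some.inj hb'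
  subst this
  rwa [hab]

/-- A transitive PAS satisfying TL and 1W is antisymmetric. -/
theorem stmt_15 {R : Type} [Nonempty R] (op : R → R → Option R)
    (hTrans : ∀ (I : Type) (φ ψ ρ : I → Set R),
      Entails op φ ψ → Entails op ψ ρ → Entails op φ ρ)
    (hTL : ∀ r : R, TLfun (fun a => op r a))
    (h1W : ∀ r s a b : R, op r a = some b → op s b = some a → a = b) :
    (∀ A B : Set R, Entails1 op A B → Entails1 op B A → A = B) ∧
    (∀ (I : Type) (φ ψ : I → Set R),
      Entails op φ ψ → Entails op ψ φ → φ = ψ) := by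
  have key : ∀ A B : Set R, Entails1 op A B → Entails1 op B A → A = B := by
    intro A B hAB hBA
    exact le_antisymm (stmt_15_incl op hTrans hTL h1W A B hAB hBA)
      (stmt_15_incl op hTrans hTL h1W B A hBA hAB)
  refine ⟨key, fun I φ ψ hφψ hψφ => ?_⟩
  funext i
  obtain ⟨r, hr⟩ := hφψ
  obtain ⟨s, hs⟩ := hψφ
  exact key (φ i) (ψ i) ⟨r, fun a ha => hr i a ha⟩ ⟨s, fun a ha => hs i a ha⟩
end

section
/- For a partial applicative structure R the following are equivalent: (i) R is posetal, i.e. for every set I the relation ⊢_I on functions I → P(R) is a partial order (reflexive, transitive and antisymmetric); (ii) R is reflexive and transitive and the relation ⊢ on P(R) is antisymmetric; (iii) R is reflexive and transitive and satisfies TL and 1W. -/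
lemma entails1_iff {R : Type} (op : R → R → Option R) (A B : Set R) :
    Entails1 op A B ↔ Entails op (fun _ : Unit => A) (fun _ : Unit => B) := by
  constructor
  · rintro ⟨r, hr⟩; exact ⟨r, fun _ a ha => hr a ha⟩
  · rintro ⟨r, hr⟩; exact ⟨r, fun a ha => hr () a ha⟩

/-- Reflexivity for all `I` gives an identity element. -/
lemma exists_id {R : Type} {op : R → R → Option R}
    (hrefl : ∀ (I : Type) (φ : I → Set R), Entails op φ φ) :
    ∃ e : R, ∀ a : R, op e a = some a := by
  obtain ⟨e, he⟩ := hrefl R (fun x => {x})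
  refine ⟨e, fun a => ?_⟩
  obtain ⟨b, hb, hb'⟩ := he a a rfl
  simp only [Set.mem_singleton_iff] at hb'
  rw [hb, hb']

/-- Transitivity for all `I` gives composition realizers. -/
lemma exists_comp {R : Type} {op : R → R → Option R}
    (htrans : ∀ (I : Type) (φ ψ ρ : I → Set R),
      Entails op φ ψ → Entails op ψ ρ → Entails op φ ρ) (r s : R) :
    ∃ t : R, ∀ a b c : R, op r a = some b → op s b = some c → op t a = some c := by
  classical
  set I := {p : R × R × R // op r p.1 = some p.2.1 ∧ op s p.2.1 = some p.2.2} with hI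
  have h1 : Entails op (fun p : I => ({p.val.1} : Set R)) (fun p : I => {p.val.2.1}) :=
    ⟨r, by rintro p a rfl; exact ⟨p.val.2.1, p.property.1, rfl⟩⟩
  have h2 : Entails op (fun p : I => ({p.val.2.1} : Set R)) (fun p : I => {p.val.2.2}) :=
    ⟨s, by rintro p a rfl; exact ⟨p.val.2.2, p.property.2, rfl⟩⟩
  obtain ⟨t, ht⟩ := htrans I _ _ _ h1 h2
  refine ⟨t, fun a b c hab hbc => ?_⟩
  obtain ⟨d, hd, hd'⟩ := ht ⟨(a, b, c), hab, hbc⟩ a rfl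
  simp only [Set.mem_singleton_iff] at hd'
  rw [hd, hd']

/-- Key lemma for (3) → (1): half of antisymmetry. -/
lemma key_subset {R : Type} {op : R → R → Option R}
    (htrans : ∀ (I : Type) (φ ψ ρ : I → Set R),
      Entails op φ ψ → Entails op ψ ρ → Entails op φ ρ)
    (hTL : ∀ r : R, TLfun (fun a => op r a))
    (h1W : ∀ r s a b : R, op r a = some b → op s b = some a → a = b)
    {I : Type} {φ ψ : I → Set R}
    (h : Entails op φ ψ) (h' : Entails op ψ φ) : ∀ i, φ i ⊆ ψ i := by
  obtain ⟨r, hr⟩ := h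
  obtain ⟨s, hs⟩ := h'
  obtain ⟨t, ht⟩ := exists_comp htrans r s
  intro i a ha
  -- all iterates of [t] at a are defined and stay in φ i
  have hiter : ∀ n : ℕ, ∃ x : R, piter (fun x => op t x) n a = some x ∧ x ∈ φ i := by
    intro n
    induction n with
    | zero => exact ⟨a, rfl, ha⟩
    | succ n ih =>
      obtain ⟨x, hx, hxφ⟩ := ih
      obtain ⟨b, hb, hbψ⟩ := hr i x hxφ
      obtain ⟨c, hc, hcφ⟩ := hs i b hbψ
      refine ⟨c, ?_, hcφ⟩
      show (piter (fun x => op t x) n a).bind (fun x => op t x) = some c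
      rw [hx]; exact ht x b c hb hc
  have hfix : op t a = some a := by
    rcases hTL t a with h | ⟨n, _, hn⟩
    · exact h
    · obtain ⟨x, hx, _⟩ := hiter n
      rw [hn] at hx; exact absurd hx (by simp)
  obtain ⟨b, hb, hbψ⟩ := hr i a ha
  obtain ⟨c, hc, _⟩ := hs i b hbψ
  have : op t a = some c := ht a b c hb hc
  rw [hfix] at this
  have hca : c = a := by injection this.symm
  rw [hca] at hc
  have : a = b := h1W r s a b hb hc
  rw [this]; exact hbψ

/-- For a PAS, being posetal is equivalent to being reflexive and
transitive with `⊢` antisymmetric, and to being reflexive and transitive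
satisfying TL and 1W. -/
theorem stmt_18 {R : Type} [Nonempty R] (op : R → R → Option R) :
    [ -- posetal: each ⊢_I is a partial order
      (∀ I : Type,
        (∀ φ : I → Set R, Entails op φ φ) ∧
        (∀ φ ψ ρ : I → Set R, Entails op φ ψ → Entails op ψ ρ → Entails op φ ρ) ∧
        (∀ φ ψ : I → Set R, Entails op φ ψ → Entails op ψ φ → φ = ψ)),
      -- reflexive, transitive and ⊢ antisymmetric
      ((∀ (I : Type) (φ : I → Set R), Entails op φ φ) ∧
       (∀ (I : Type) (φ ψ ρ : I → Set R),
          Entails op φ ψ → Entails op ψ ρ → Entails op φ ρ) ∧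
       (∀ A B : Set R, Entails1 op A B → Entails1 op B A → A = B)),
      -- reflexive, transitive, TL and 1W
      ((∀ (I : Type) (φ : I → Set R), Entails op φ φ) ∧
       (∀ (I : Type) (φ ψ ρ : I → Set R),
          Entails op φ ψ → Entails op ψ ρ → Entails op φ ρ) ∧
       (∀ r : R, TLfun (fun a => op r a)) ∧
       (∀ r s a b : R, op r a = some b → op s b = some a → a = b)) ].TFAE := by
  tfae_have 1 → 2 := by
    intro h
    refine ⟨fun I => (h I).1, fun I => (h I).2.1, fun A B hAB hBA => ?_⟩
    have := (h Unit).2.2 _ _ ((entails1_iff op A B).mp hAB) ((entails1_iff op B A).mp hBA)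
    exact congrFun this ()
  tfae_have 2 → 3 := by
    rintro ⟨hrefl, htrans, hanti⟩
    obtain ⟨e, he⟩ := exists_id hrefl
    have htrans1 : ∀ A B C : Set R, Entails1 op A B → Entails1 op B C → Entails1 op A C := by
      intro A B C h1 h2
      rw [entails1_iff] at h1 h2 ⊢
      exact htrans Unit _ _ _ h1 h2
    refine ⟨hrefl, htrans, fun r a => ?_, fun r s a b hab hba => ?_⟩
    · -- TL
      set f : R → Option R := fun x => op r x with hf
      by_cases hdiv : ∃ n : ℕ, 1 ≤ n ∧ piter f n a = none
      · exact Or.inr hdiv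
      push_neg at hdiv
      have hdef : ∀ n : ℕ, ∃ x : R, piter f n a = some x := by
        intro n
        cases n with
        | zero => exact ⟨a, rfl⟩
        | succ n =>
          cases hpn : piter f (n+1) a with
          | none => exact absurd hpn (hdiv (n+1) (Nat.succ_le_succ (Nat.zero_le n)))
          | some x => exact ⟨x, rfl⟩
      -- orbit sets
      set A : Set R := {x | ∃ n, piter f n a = some x} with hA
      set B : Set R := {x | ∃ n, piter f (n+1) a = some x} with hB
      have hAB : Entails1 op A B := by
        refine ⟨r, ?_⟩
        rintro x ⟨n, hn⟩
        obtain ⟨y, hy⟩ := hdef (n+1)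
        have : piter f (n+1) a = op r x := by
          show (piter f n a).bind f = op r x
          rw [hn]; rfl
        exact ⟨y, by rw [← this]; exact hy, ⟨n, hy⟩⟩
      have hBA : Entails1 op B A := by
        refine ⟨e, ?_⟩
        rintro x ⟨n, hn⟩
        exact ⟨x, he x, ⟨n+1, hn⟩⟩
      have hABeq : A = B := hanti A B hAB hBA
      have haB : a ∈ B := by rw [← hABeq]; exact ⟨0, rfl⟩
      obtain ⟨p, hp⟩ := haB
      -- a is periodic with period p+1
      obtain ⟨b, hb⟩ := hdef 1
      have hrab : op r a = some b := by
        have : piter f 1 a = op r a := by show (some a).bind f = op r a; rfl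
        rw [← this]; exact hb
      -- Entails1 {b} {x | piter f (k+1) a = some x} for all k
      have hchain : ∀ k : ℕ, Entails1 op {b} {x | piter f (k+1) a = some x} := by
        intro k
        induction k with
        | zero => exact ⟨e, by rintro x rfl; exact ⟨x, he x, hb⟩⟩
        | succ k ih =>
          refine htrans1 _ {x | piter f (k+1) a = some x} _ ih ⟨r, ?_⟩
          rintro x hx
          obtain ⟨y, hy⟩ := hdef (k+2)
          have : piter f (k+2) a = op r x := by
            show (piter f (k+1) a).bind f = op r x
            rw [hx]; rfl
          exact ⟨y, by rw [← this]; exact hy, hy⟩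
      have hba' : Entails1 op {b} {a} := by
        have := hchain p
        have hset : {x | piter f (p+1) a = some x} = ({a} : Set R) := by
          ext x
          simp only [Set.mem_setOf_eq, Set.mem_singleton_iff, hp]
          constructor
          · intro h; injection h.symm
          · rintro rfl; rfl
        rwa [hset] at this
      have hab' : Entails1 op {a} {b} := ⟨r, by rintro x rfl; exact ⟨b, hrab, rfl⟩⟩
      have : ({a} : Set R) = {b} := hanti _ _ hab' hba'
      have hba2 : b = a := by
        have : b ∈ ({a} : Set R) := by rw [this]; rfl
        exact this
      left
      show op r a = some a
      rw [hrab, hba2]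
    · -- 1W
      have h1 : Entails1 op {a} {b} := ⟨r, by rintro x rfl; exact ⟨b, hab, rfl⟩⟩
      have h2 : Entails1 op {b} {a} := ⟨s, by rintro x rfl; exact ⟨a, hba, rfl⟩⟩
      have := hanti _ _ h1 h2
      have : a ∈ ({b} : Set R) := by rw [← this]; rfl
      exact this
  tfae_have 3 → 1 := by
    rintro ⟨hrefl, htrans, hTL, h1W⟩
    intro I
    refine ⟨hrefl I, htrans I, fun φ ψ h h' => ?_⟩
    funext i
    exact Set.Subset.antisymm (key_subset htrans hTL h1W h h' i)
      (key_subset htrans hTL h1W h' h i)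
  tfae_finish
end

section
/- Let R be a preorderal partial applicative structure such that the cardinality of the product ∏_{r ∈ R} R(r) is strictly greater than the cardinality of R, where R(r) = {s·r | s ∈ R, s·r defined}. Then the preorder ⊢_R on P(R)^R is not complete: there exists a family of elements of P(R)^R (indexed by R) having no supremum with respect to ⊢_R. -/
/-- If `R` is a preorderal PAS with `|∏_{r ∈ R} R(r)| > |R|`,
where `R(r) = {s·r | s ∈ R, s·r defined}`, then the preorder `⊢_R` on
`P(R)^R` is not complete: some `R`-indexed family has no supremum. -/
theorem stmt_19 {R : Type} [Nonempty R] (op : R → R → Option R)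
    (hRefl : ∀ (I : Type) (φ : I → Set R), Entails op φ φ)
    (hTrans : ∀ (I : Type) (φ ψ ρ : I → Set R),
      Entails op φ ψ → Entails op ψ ρ → Entails op φ ρ)
    (hcard : Cardinal.mk R <
      Cardinal.mk (∀ r : R, {b : R // ∃ s : R, op s r = some b})) :
    ∃ F : R → (R → Set R), ¬ ∃ ψ : R → Set R,
      (∀ i : R, Entails op (F i) ψ) ∧
      (∀ χ : R → Set R, (∀ i : R, Entails op (F i) χ) → Entails op ψ χ) := by
  classical
  refine ⟨fun i j => {a | a = i ∧ j = i}, ?_⟩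
  rintro ⟨ψ, hub, hlub⟩
  -- for each i, pick a_i ∈ ψ i ∩ R(i)
  have hA : ∀ i : R, ∃ a : R, a ∈ ψ i ∧ ∃ s, op s i = some a := by
    intro i
    obtain ⟨r, hr⟩ := hub i
    obtain ⟨b, hb1, hb2⟩ := hr i i ⟨rfl, rfl⟩
    exact ⟨b, hb2, r, hb1⟩
  choose a ha hs using hA
  have key : ∀ c : (∀ r : R, {b : R // ∃ s : R, op s r = some b}),
      ∃ r : R, ∀ i : R, op r (a i) = some (c i).1 := by
    intro c
    have hub' : ∀ i : R,
        Entails op (fun j => {x | x = i ∧ j = i}) (fun j => {(c j).1}) := by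
      intro i
      obtain ⟨s, hsi⟩ := (c i).2
      refine ⟨s, fun j x hx => ?_⟩
      obtain ⟨rfl, rfl⟩ := hx
      exact ⟨_, hsi, rfl⟩
    obtain ⟨r, hr⟩ := hlub _ hub'
    refine ⟨r, fun i => ?_⟩
    obtain ⟨b, hb1, hb2⟩ := hr i (a i) (ha i)
    simp only [Set.mem_singleton_iff] at hb2
    rw [hb1, hb2]
  choose g hg using key
  have hinj : Function.Injective g := by
    intro c c' hcc
    funext i
    have h1 := hg c i
    have h2 := hg c' i
    rw [hcc] at h1
    exact Subtype.ext (Option.some_injective _ (h1.symm.trans h2))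
  exact absurd (Cardinal.mk_le_of_injective hinj) hcard.not_ge
end
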